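/- Let p be a prime with p ≡ 1 (mod 5), set t = (p−1)/5, and let T be a generator of the group of characters on 𝔽_p. Then Σ_{i=0}^{4} Σ_{j=0}^{4} G_{(i+j)t} · G_{−it} · G_{−jt} = −1 − 12p − 3p · Σ_{k=1}^{4} J(T^{kt}, T^{2kt}, T^{2kt}). -/

import Mathlib

open Finset

/-- The standard additive character `θ(a) = e^{2πia/p}` on `𝔽_p`. -/
noncomputable def theta (p : ℕ) (a : ZMod p) : ℂ :=
  Complex.exp (2 * Real.pi * Complex.I * (ZMod.val a : ℂ) / (p : ℂ))

/-- The Gauss sum `G(χ) = ∑_{x ∈ 𝔽_p} χ(x) θ(x)`. -/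
noncomputable def gaussS (p : ℕ) [NeZero p] (χ : MulChar (ZMod p) ℂ) : ℂ :=
  ∑ x : ZMod p, χ x * theta p x

/-- The generalized Jacobi sum `J(χ₁,χ₂,χ₃) = ∑_{t₁+t₂+t₃=1} χ₁(t₁)χ₂(t₂)χ₃(t₃)`. -/
noncomputable def jacobi3 (p : ℕ) [NeZero p] (χ₁ χ₂ χ₃ : MulChar (ZMod p) ℂ) : ℂ :=
  ∑ v ∈ Finset.univ.filter (fun v : ZMod p × ZMod p × ZMod p => v.1 + v.2.1 + v.2.2 = 1),
    χ₁ v.1 * χ₂ v.2.1 * χ₃ v.2.2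

section Aux

variable (p : ℕ) [Fact p.Prime]

lemma zet_prim : IsPrimitiveRoot (Complex.exp (2 * Real.pi * Complex.I / p)) p :=
  Complex.isPrimitiveRoot_exp p (NeZero.ne p)

lemma theta_eq (a : ZMod p) :
    theta p a = AddChar.zmodChar p (zet_prim p).pow_eq_one a := by
  rw [theta, AddChar.zmodChar_apply, ← Complex.exp_nat_mul]
  congr 1
  ring

lemma theta_zero : theta p 0 = 1 := by
  rw [theta_eq]; exact AddChar.map_zero_eq_one _

lemma theta_add (a b : ZMod p) : theta p (a + b) = theta p a * theta p b := by
  rw [theta_eq, theta_eq, theta_eq]; exact AddChar.map_add_eq_mul _ a b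

lemma theta_total : ∑ x : ZMod p, theta p x = 0 := by
  have h1 : (1 : ℕ) < p := (Fact.out : p.Prime).one_lt
  simp_rw [theta_eq]
  rw [AddChar.sum_eq_zero_iff_ne_zero]
  intro h
  have h2 : AddChar.zmodChar p (zet_prim p).pow_eq_one (1 : ZMod p) = 1 := by
    rw [h]; rfl
  rw [AddChar.zmodChar_apply, ZMod.val_one_eq_one_mod, Nat.mod_eq_of_lt h1, pow_one] at h2
  exact (zet_prim p).ne_one h1 h2

lemma theta_sum_ne : ∑ x ∈ Finset.univ.erase (0 : ZMod p), theta p x = -1 := by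
  have h := Finset.add_sum_erase Finset.univ (theta p) (Finset.mem_univ (0 : ZMod p))
  rw [theta_total, theta_zero] at h
  linear_combination h

lemma one_mulChar_apply (x : ZMod p) (hx : x ≠ 0) : (1 : MulChar (ZMod p) ℂ) x = 1 :=
  MulChar.one_apply (isUnit_iff_ne_zero.mpr hx)

lemma gaussS_one : gaussS p (1 : MulChar (ZMod p) ℂ) = -1 := by
  rw [gaussS, ← Finset.add_sum_erase Finset.univ _ (Finset.mem_univ (0 : ZMod p)),
    MulChar.map_nonunit _ not_isUnit_zero, zero_mul, zero_add, ← theta_sum_ne p]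
  refine Finset.sum_congr rfl fun x hx => ?_
  rw [one_mulChar_apply p x (Finset.mem_erase.1 hx).1, one_mul]

lemma sum_one_mulChar : ∑ x : ZMod p, (1 : MulChar (ZMod p) ℂ) x = (p : ℂ) - 1 := by
  rw [← Finset.add_sum_erase Finset.univ _ (Finset.mem_univ (0 : ZMod p)),
    MulChar.map_nonunit _ not_isUnit_zero, zero_add,
    Finset.sum_congr rfl (fun x hx => one_mulChar_apply p x (Finset.mem_erase.1 hx).1),
    Finset.sum_const, Finset.card_erase_of_mem (Finset.mem_univ _), Finset.card_univ, ZMod.card,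
    nsmul_eq_mul, mul_one, Nat.cast_sub (Fact.out : p.Prime).one_lt.le, Nat.cast_one]

lemma mul_inv_apply (χ : MulChar (ZMod p) ℂ) (x : ZMod p) (hx : x ≠ 0) :
    χ x * χ⁻¹ x = 1 := by
  have : (χ * χ⁻¹) x = 1 := by rw [mul_inv_cancel]; exact one_mulChar_apply p x hx
  rw [← this]; rfl


lemma pcast_ne : (p : ℂ) - 1 ≠ 0 := by
  refine sub_ne_zero.mpr ?_
  exact_mod_cast (Fact.out : p.Prime).ne_one

lemma gaussS_mul_gaussS_inv (χ : MulChar (ZMod p) ℂ) (hχ : χ ≠ 1) (hodd : χ (-1) = 1) :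
    gaussS p χ * gaussS p χ⁻¹ = p := by
  classical
  set f : ZMod p × ZMod p → ℂ := fun v => χ v.1 * χ⁻¹ v.2 with hf
  set A : ZMod p → ℂ :=
    fun s => ∑ v ∈ Finset.univ.filter (fun v : ZMod p × ZMod p => v.1 + v.2 = s), f v with hA
  have h3 : gaussS p χ * gaussS p χ⁻¹ = ∑ s : ZMod p, theta p s * A s := by
    rw [gaussS, gaussS, Finset.sum_mul_sum]
    rw [show (∑ s : ZMod p, theta p s * A s) =
        ∑ s : ZMod p, ∑ v ∈ Finset.univ.filter (fun v : ZMod p × ZMod p => v.1 + v.2 = s),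
          f v * theta p (v.1 + v.2) from by
      refine Finset.sum_congr rfl fun s _ => ?_
      rw [hA]; dsimp only; rw [Finset.mul_sum]
      exact Finset.sum_congr rfl fun v hv => by rw [(Finset.mem_filter.1 hv).2]; ring]
    rw [Finset.sum_fiberwise Finset.univ (fun v : ZMod p × ZMod p => v.1 + v.2)
      (fun v => f v * theta p (v.1 + v.2)), Fintype.sum_prod_type]
    exact Finset.sum_congr rfl fun x _ => Finset.sum_congr rfl fun y _ => by
      rw [theta_add]; simp only [hf]; ring
  have hsc : ∀ s : ZMod p, s ≠ 0 → A s = A 1 := by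
    intro s hs
    rw [hA]; dsimp only
    refine Finset.sum_nbij' (fun v => (s⁻¹ * v.1, s⁻¹ * v.2)) (fun w => (s * w.1, s * w.2))
      ?_ ?_ ?_ ?_ ?_
    · intro v hv
      simp only [Finset.mem_filter, Finset.mem_univ, true_and] at hv ⊢
      rw [← mul_add, hv, inv_mul_cancel₀ hs]
    · intro w hw
      simp only [Finset.mem_filter, Finset.mem_univ, true_and] at hw ⊢
      rw [← mul_add, hw, mul_one]
    · intro v _
      dsimp only
      rw [← mul_assoc, ← mul_assoc, mul_inv_cancel₀ hs, one_mul, one_mul]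
    · intro w _
      dsimp only
      rw [← mul_assoc, ← mul_assoc, inv_mul_cancel₀ hs, one_mul, one_mul]
    · intro v _
      simp only [hf, map_mul]
      have hu : χ s⁻¹ * χ⁻¹ s⁻¹ = 1 := mul_inv_apply p χ s⁻¹ (inv_ne_zero hs)
      calc χ v.1 * χ⁻¹ v.2 = (χ s⁻¹ * χ⁻¹ s⁻¹) * (χ v.1 * χ⁻¹ v.2) := by rw [hu, one_mul]
        _ = χ s⁻¹ * χ v.1 * (χ⁻¹ s⁻¹ * χ⁻¹ v.2) := by ring
  have hA0 : A 0 = (p : ℂ) - 1 := by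
    rw [hA]; dsimp only
    have hneg : χ⁻¹ (-1 : ZMod p) = 1 := by
      have h := mul_inv_apply p χ (-1 : ZMod p) (by
        intro h; exact one_ne_zero (by rw [← neg_neg (1 : ZMod p), h, neg_zero]))
      rw [hodd, one_mul] at h; exact h
    rw [show (p : ℂ) - 1 = ∑ x : ZMod p, (1 : MulChar (ZMod p) ℂ) x from (sum_one_mulChar p).symm]
    refine Finset.sum_nbij' (fun v => v.1) (fun x => (x, -x)) ?_ ?_ ?_ ?_ ?_
    · intro v _; exact Finset.mem_univ _
    · intro x _
      simp only [Finset.mem_filter, Finset.mem_univ, true_and]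
      ring
    · intro v hv
      simp only [Finset.mem_filter, Finset.mem_univ, true_and] at hv
      have h2 : v.2 = -v.1 := by linear_combination hv
      try dsimp only
      exact Prod.ext rfl h2.symm
    · intro x _; rfl
    · intro v hv
      simp only [Finset.mem_filter, Finset.mem_univ, true_and] at hv
      have hv2 : v.2 = -v.1 := by linear_combination hv
      simp only [hf]
      by_cases h1 : v.1 = 0
      · rw [h1, MulChar.map_nonunit χ not_isUnit_zero, zero_mul,
          MulChar.map_nonunit (1 : MulChar (ZMod p) ℂ) not_isUnit_zero]
      · rw [hv2, show -v.1 = -1 * v.1 from by ring, map_mul, hneg, one_mul,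
          mul_inv_apply p χ v.1 h1, one_mulChar_apply p v.1 h1]
  have hAsum : ∑ s : ZMod p, A s = 0 := by
    rw [hA]
    rw [Finset.sum_fiberwise Finset.univ (fun v : ZMod p × ZMod p => v.1 + v.2) f]
    rw [show (∑ v : ZMod p × ZMod p, f v) = (∑ x : ZMod p, χ x) * ∑ y : ZMod p, χ⁻¹ y from by
      rw [Finset.sum_mul_sum, Fintype.sum_prod_type]]
    rw [MulChar.sum_eq_zero_of_ne_one hχ, zero_mul]
  have hA1 : A 1 = -1 := by
    rw [← Finset.add_sum_erase Finset.univ A (Finset.mem_univ (0 : ZMod p))] at hAsum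
    rw [Finset.sum_congr rfl (fun s hs => hsc s (Finset.mem_erase.1 hs).1),
      Finset.sum_const, Finset.card_erase_of_mem (Finset.mem_univ _), Finset.card_univ,
      ZMod.card, nsmul_eq_mul, hA0, Nat.cast_sub (Fact.out : p.Prime).one_lt.le,
      Nat.cast_one] at hAsum
    have h' : ((p : ℂ) - 1) * A 1 = ((p : ℂ) - 1) * (-1) := by linear_combination hAsum
    exact mul_left_cancel₀ (pcast_ne p) h'
  have hrest : ∑ s ∈ Finset.univ.erase (0 : ZMod p), theta p s * A s
      = ∑ s ∈ Finset.univ.erase (0 : ZMod p), theta p s * (-1) :=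
    Finset.sum_congr rfl fun s hs => by rw [hsc s (Finset.mem_erase.1 hs).1, hA1]
  rw [h3, ← Finset.add_sum_erase Finset.univ _ (Finset.mem_univ (0 : ZMod p)), theta_zero,
    one_mul, hA0, hrest, ← Finset.sum_mul, theta_sum_ne]
  ring

lemma gaussS_triple (χ₁ χ₂ χ₃ : MulChar (ZMod p) ℂ) (h1 : χ₁ ≠ 1)
    (hprod : χ₁ * χ₂ * χ₃ = 1) :
    gaussS p χ₁ * gaussS p χ₂ * gaussS p χ₃ = -(p : ℂ) * jacobi3 p χ₁ χ₂ χ₃ := by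
  classical
  set f : ZMod p × ZMod p × ZMod p → ℂ := fun v => χ₁ v.1 * χ₂ v.2.1 * χ₃ v.2.2 with hf
  set A : ZMod p → ℂ :=
    fun s => ∑ v ∈ Finset.univ.filter
      (fun v : ZMod p × ZMod p × ZMod p => v.1 + v.2.1 + v.2.2 = s), f v with hA
  have hA1 : A 1 = jacobi3 p χ₁ χ₂ χ₃ := rfl
  have h3 : gaussS p χ₁ * gaussS p χ₂ * gaussS p χ₃ = ∑ s : ZMod p, theta p s * A s := by
    rw [gaussS, gaussS, gaussS, Finset.sum_mul_sum, Finset.sum_mul_sum]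
    rw [show (∑ s : ZMod p, theta p s * A s) =
        ∑ s : ZMod p, ∑ v ∈ Finset.univ.filter
          (fun v : ZMod p × ZMod p × ZMod p => v.1 + v.2.1 + v.2.2 = s),
          f v * theta p (v.1 + v.2.1 + v.2.2) from by
      refine Finset.sum_congr rfl fun s _ => ?_
      rw [hA]; dsimp only; rw [Finset.mul_sum]
      exact Finset.sum_congr rfl fun v hv => by rw [(Finset.mem_filter.1 hv).2]; ring]
    rw [Finset.sum_fiberwise Finset.univ
      (fun v : ZMod p × ZMod p × ZMod p => v.1 + v.2.1 + v.2.2)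
      (fun v => f v * theta p (v.1 + v.2.1 + v.2.2)), Fintype.sum_prod_type]
    refine Finset.sum_congr rfl fun x _ => ?_
    rw [Fintype.sum_prod_type]
    simp only [Finset.sum_mul]
    rw [Finset.sum_comm]
    refine Finset.sum_congr rfl fun y _ => Finset.sum_congr rfl fun z _ => ?_
    simp only [hf]
    rw [theta_add, theta_add]; ring
  have hsc : ∀ s : ZMod p, s ≠ 0 → A s = A 1 := by
    intro s hs
    rw [hA]; dsimp only
    refine Finset.sum_nbij' (fun v => (s⁻¹ * v.1, s⁻¹ * v.2.1, s⁻¹ * v.2.2))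
      (fun w => (s * w.1, s * w.2.1, s * w.2.2)) ?_ ?_ ?_ ?_ ?_
    · intro v hv
      simp only [Finset.mem_filter, Finset.mem_univ, true_and] at hv ⊢
      rw [← mul_add, ← mul_add, hv, inv_mul_cancel₀ hs]
    · intro w hw
      simp only [Finset.mem_filter, Finset.mem_univ, true_and] at hw ⊢
      rw [← mul_add, ← mul_add, hw, mul_one]
    · intro v _
      dsimp only
      rw [← mul_assoc, ← mul_assoc, ← mul_assoc, mul_inv_cancel₀ hs, one_mul, one_mul, one_mul]
    · intro w _
      dsimp only
      rw [← mul_assoc, ← mul_assoc, ← mul_assoc, inv_mul_cancel₀ hs, one_mul, one_mul, one_mul]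
    · intro v _
      simp only [hf, map_mul]
      have hu : χ₁ s⁻¹ * χ₂ s⁻¹ * χ₃ s⁻¹ = 1 := by
        have : (χ₁ * χ₂ * χ₃) s⁻¹ = 1 := by
          rw [hprod]; exact one_mulChar_apply p s⁻¹ (inv_ne_zero hs)
        rw [← this]; rfl
      calc χ₁ v.1 * χ₂ v.2.1 * χ₃ v.2.2
          = (χ₁ s⁻¹ * χ₂ s⁻¹ * χ₃ s⁻¹) * (χ₁ v.1 * χ₂ v.2.1 * χ₃ v.2.2) := by rw [hu, one_mul]
        _ = χ₁ s⁻¹ * χ₁ v.1 * (χ₂ s⁻¹ * χ₂ v.2.1) * (χ₃ s⁻¹ * χ₃ v.2.2) := by ring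
  have hAsum : ∑ s : ZMod p, A s = 0 := by
    rw [hA]
    rw [Finset.sum_fiberwise Finset.univ
      (fun v : ZMod p × ZMod p × ZMod p => v.1 + v.2.1 + v.2.2) f]
    rw [show (∑ v : ZMod p × ZMod p × ZMod p, f v)
        = (∑ x : ZMod p, χ₁ x) * ∑ w : ZMod p × ZMod p, χ₂ w.1 * χ₃ w.2 from by
      rw [Finset.sum_mul_sum, Fintype.sum_prod_type]
      exact Finset.sum_congr rfl fun x _ => Finset.sum_congr rfl fun w _ => by
        simp only [hf]; ring]
    rw [MulChar.sum_eq_zero_of_ne_one h1, zero_mul]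
  have hA0 : A 0 = -((p : ℂ) - 1) * jacobi3 p χ₁ χ₂ χ₃ := by
    rw [← Finset.add_sum_erase Finset.univ A (Finset.mem_univ (0 : ZMod p))] at hAsum
    rw [Finset.sum_congr rfl (fun s hs => by rw [hsc s (Finset.mem_erase.1 hs).1, hA1]),
      Finset.sum_const, Finset.card_erase_of_mem (Finset.mem_univ _), Finset.card_univ,
      ZMod.card, nsmul_eq_mul, Nat.cast_sub (Fact.out : p.Prime).one_lt.le,
      Nat.cast_one] at hAsum
    linear_combination hAsum
  have hrest : ∑ s ∈ Finset.univ.erase (0 : ZMod p), theta p s * A s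
      = ∑ s ∈ Finset.univ.erase (0 : ZMod p), theta p s * jacobi3 p χ₁ χ₂ χ₃ :=
    Finset.sum_congr rfl fun s hs => by rw [hsc s (Finset.mem_erase.1 hs).1, hA1]
  rw [h3, ← Finset.add_sum_erase Finset.univ _ (Finset.mem_univ (0 : ZMod p)), theta_zero,
    one_mul, hA0, hrest, ← Finset.sum_mul, theta_sum_ne]
  ring

lemma char_neg_one (χ : MulChar (ZMod p) ℂ) (h5 : χ ^ 5 = 1) : χ (-1) = 1 := by
  have hne : (-1 : ZMod p) ≠ 0 := neg_ne_zero.mpr one_ne_zero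
  have h2 : χ (-1) * χ (-1) = 1 := by
    rw [← map_mul, neg_mul_neg, one_mul, map_one]
  have h5' : χ (-1) ^ 5 = 1 := by
    rw [← MulChar.pow_apply' χ (by norm_num) (-1), h5]
    exact one_mulChar_apply p (-1) hne
  calc χ (-1) = χ (-1) ^ 5 := by
        rw [show (5 : ℕ) = 1 + 2 + 2 from rfl, pow_add, pow_add, pow_one, pow_two, h2,
          mul_one, mul_one]
    _ = 1 := h5'

lemma char_pow_card_sub_one (χ : MulChar (ZMod p) ℂ) : χ ^ (p - 1) = 1 := by
  refine MulChar.ext fun a => ?_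
  rw [MulChar.pow_apply_coe, ← map_pow, ZMod.pow_card_sub_one_eq_one (Units.ne_zero a), map_one,
    MulChar.one_apply_coe]

lemma gen_pow_ne_one (T : MulChar (ZMod p) ℂ)
    (hT : ∀ χ : MulChar (ZMod p) ℂ, ∃ n : ℕ, χ = T ^ n) (t : ℕ) (h5t : 5 * t = p - 1) :
    T ^ t ≠ 1 := by
  intro h
  have hp2 : 2 ≤ p := (Fact.out : p.Prime).two_le
  have htpos : 0 < t := by omega
  have hsurj : Function.Surjective (fun k : Fin t => T ^ (k : ℕ)) := by
    intro χ
    obtain ⟨n, rfl⟩ := hT χ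
    refine ⟨⟨n % t, Nat.mod_lt n htpos⟩, ?_⟩
    dsimp only
    conv_rhs => rw [show n = t * (n / t) + n % t from (Nat.div_add_mod n t).symm]
    rw [pow_add, pow_mul, h, one_pow, one_mul]
  have hle : Nat.card (MulChar (ZMod p) ℂ) ≤ t := by
    have h1 := Nat.card_le_card_of_surjective _ hsurj
    simpa using h1
  haveI : NeZero ((Monoid.exponent (ZMod p)ˣ : ℕ) : ℂ) :=
    ⟨Nat.cast_ne_zero.mpr Monoid.exponent_ne_zero_of_finite⟩
  have hcard : Nat.card (MulChar (ZMod p) ℂ) = p - 1 := by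
    rw [MulChar.card_eq_card_units_of_hasEnoughRootsOfUnity, Nat.card_eq_fintype_card,
      ZMod.card_units_eq_totient, Nat.totient_prime (Fact.out : p.Prime)]
  omega

lemma jacobi3_swap (χ₁ χ₂ χ₃ : MulChar (ZMod p) ℂ) :
    jacobi3 p χ₁ χ₂ χ₃ = jacobi3 p χ₂ χ₁ χ₃ := by
  classical
  rw [jacobi3, jacobi3, Finset.sum_filter, Finset.sum_filter]
  refine Fintype.sum_equiv
    ⟨fun v : ZMod p × ZMod p × ZMod p => (v.2.1, v.1, v.2.2),
     fun v => (v.2.1, v.1, v.2.2), fun v => rfl, fun v => rfl⟩ _ _ fun v => ?_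
  dsimp only [Equiv.coe_fn_mk]
  refine if_congr ?_ (by ring) rfl
  constructor <;> intro h <;> linear_combination h

lemma jacobi3_rot (χ₁ χ₂ χ₃ : MulChar (ZMod p) ℂ) :
    jacobi3 p χ₁ χ₂ χ₃ = jacobi3 p χ₃ χ₁ χ₂ := by
  classical
  rw [jacobi3, jacobi3, Finset.sum_filter, Finset.sum_filter]
  refine Fintype.sum_equiv
    ⟨fun v : ZMod p × ZMod p × ZMod p => (v.2.2, v.1, v.2.1),
     fun w => (w.2.1, w.2.2, w.1), fun v => rfl, fun w => rfl⟩ _ _ fun v => ?_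
  dsimp only [Equiv.coe_fn_mk]
  refine if_congr ?_ (by ring) rfl
  constructor <;> intro h <;> linear_combination h

end Aux

/-- Evaluation of the double Gauss-sum sum `B` (proof of Theorem 5.1 of McCarthy). -/
theorem gauss_double_sum (p : ℕ) [Fact p.Prime] (hp : p % 5 = 1)
    (t : ℕ) (ht : t = (p - 1) / 5)
    (T : MulChar (ZMod p) ℂ) (hT : ∀ χ : MulChar (ZMod p) ℂ, ∃ n : ℕ, χ = T ^ n) :
    ∑ i ∈ Finset.range 5, ∑ j ∈ Finset.range 5,
      gaussS p (T ^ ((i + j) * t)) * gaussS p (T ^ (-(i : ℤ) * t)) *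
        gaussS p (T ^ (-(j : ℤ) * t)) =
    -1 - 12 * (p : ℂ) -
      3 * (p : ℂ) * ∑ k ∈ Finset.Icc (1 : ℕ) 4,
        jacobi3 p (T ^ (k * t)) (T ^ (2 * k * t)) (T ^ (2 * k * t)) := by
  have hpr : p.Prime := Fact.out
  have h5t : 5 * t = p - 1 := by have := hpr.two_le; omega
  have hT1 : T ^ (p - 1) = 1 := char_pow_card_sub_one p T
  have hTt : T ^ t ≠ 1 := gen_pow_ne_one p T hT t h5t
  set U := T ^ t with hUdef
  have hU5 : U ^ 5 = 1 := by rw [hUdef, ← pow_mul, show t * 5 = p - 1 from by omega, hT1]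
  have hUord : orderOf U = 5 := by
    have hdvd : orderOf U ∣ 5 := orderOf_dvd_of_pow_eq_one hU5
    rcases (by norm_num : Nat.Prime 5).eq_one_or_self_of_dvd _ hdvd with h | h
    · exact absurd (orderOf_eq_one_iff.mp h) hTt
    · exact h
  have hUne : ∀ k : ℕ, 1 ≤ k → k ≤ 4 → U ^ k ≠ 1 := by
    intro k h1 h4 h
    have hd := orderOf_dvd_of_pow_eq_one h
    rw [hUord] at hd
    omega
  have hUpow : ∀ k : ℕ, T ^ (k * t) = U ^ k := fun k => by rw [pow_mul']
  have hL : ∀ i j : ℕ,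
      gaussS p (T ^ ((i + j) * t)) * gaussS p (T ^ (-(i : ℤ) * t)) *
        gaussS p (T ^ (-(j : ℤ) * t))
      = gaussS p (U ^ (i + j)) * gaussS p ((U ^ i)⁻¹) * gaussS p ((U ^ j)⁻¹) := by
    intro i j
    have hz : ∀ i : ℕ, T ^ (-(i : ℤ) * (t : ℤ)) = (U ^ i)⁻¹ := fun i => by
      rw [show -(i : ℤ) * (t : ℤ) = -((i * t : ℕ) : ℤ) from by push_cast; ring, zpow_neg,
        zpow_natCast, hUpow]
    rw [hUpow, hz, hz]
  have hUinv : ∀ i : ℕ, i ≤ 5 → (U ^ i)⁻¹ = U ^ (5 - i) := fun i hi =>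
    inv_eq_of_mul_eq_one_right (by rw [← pow_add, show i + (5 - i) = 5 from by omega, hU5])
  have hi1 : U⁻¹ = U ^ (4 : ℕ) := by
    have h := hUinv 1 (by omega); rw [pow_one] at h; rw [h]
  have hi2 : (U ^ (2 : ℕ))⁻¹ = U ^ (3 : ℕ) := hUinv 2 (by omega)
  have hi3 : (U ^ (3 : ℕ))⁻¹ = U ^ (2 : ℕ) := hUinv 3 (by omega)
  have hi4 : (U ^ (4 : ℕ))⁻¹ = U := by
    have h := hUinv 4 (by omega); rw [h, show (5 - 4 : ℕ) = 1 from rfl, pow_one]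
  have hU6 : U ^ (6 : ℕ) = U := by
    rw [show (6 : ℕ) = 1 + 5 from rfl, pow_add, hU5, mul_one, pow_one]
  have hU7 : U ^ (7 : ℕ) = U ^ (2 : ℕ) := by
    rw [show (7 : ℕ) = 2 + 5 from rfl, pow_add, hU5, mul_one]
  have hU8 : U ^ (8 : ℕ) = U ^ (3 : ℕ) := by
    rw [show (8 : ℕ) = 3 + 5 from rfl, pow_add, hU5, mul_one]
  have hg0 : gaussS p (1 : MulChar (ZMod p) ℂ) = -1 := gaussS_one p
  have hneg : ∀ k : ℕ, 1 ≤ k → k ≤ 4 → (U ^ k) (-1 : ZMod p) = 1 := fun k _ _ =>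
    char_neg_one p (U ^ k) (by rw [← pow_mul, mul_comm, pow_mul, hU5, one_pow])
  have hpair : ∀ k : ℕ, 1 ≤ k → k ≤ 4 → gaussS p (U ^ k) * gaussS p ((U ^ k)⁻¹) = (p : ℂ) :=
    fun k h1 h4 => gaussS_mul_gaussS_inv p (U ^ k) (hUne k h1 h4) (hneg k h1 h4)
  have hP1 : gaussS p U * gaussS p (U ^ (4 : ℕ)) = (p : ℂ) := by
    have h := hpair 1 (by omega) (by omega)
    rwa [pow_one, hi1] at h
  have hP2 : gaussS p (U ^ (2 : ℕ)) * gaussS p (U ^ (3 : ℕ)) = (p : ℂ) := by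
    have h := hpair 2 (by omega) (by omega)
    rwa [hi2] at h
  have hkey : ∀ a b c : ℕ, 1 ≤ a → a ≤ 4 → (a + b + c = 5 ∨ a + b + c = 10) →
      gaussS p (U ^ a) * gaussS p (U ^ b) * gaussS p (U ^ c)
        = -(p : ℂ) * jacobi3 p (U ^ a) (U ^ b) (U ^ c) := by
    intro a b c h1 h4 hsum
    refine gaussS_triple p _ _ _ (hUne a h1 h4) ?_
    rw [← pow_add, ← pow_add]
    rcases hsum with h | h <;> rw [h]
    · exact hU5
    · rw [show (10 : ℕ) = 5 * 2 from rfl, pow_mul, hU5, one_pow]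
  -- the 12 generic term equations
  have e11 := hkey 2 4 4 (by omega) (by omega) (by omega)
  have e12 := hkey 3 4 3 (by omega) (by omega) (by omega)
  rw [jacobi3_swap p (U ^ 3) (U ^ 4) (U ^ 3)] at e12
  have e13 := hkey 4 4 2 (by omega) (by omega) (by omega)
  rw [jacobi3_rot p (U ^ 4) (U ^ 4) (U ^ 2)] at e13
  have e21 := hkey 3 3 4 (by omega) (by omega) (by omega)
  rw [jacobi3_rot p (U ^ 3) (U ^ 3) (U ^ 4)] at e21
  have e22 := hkey 4 3 3 (by omega) (by omega) (by omega)
  have e24 := hkey 1 3 1 (by omega) (by omega) (by omega)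
  rw [pow_one] at e24
  rw [jacobi3_swap p U (U ^ 3) U] at e24
  have e31 := hkey 4 2 4 (by omega) (by omega) (by omega)
  rw [jacobi3_swap p (U ^ 4) (U ^ 2) (U ^ 4)] at e31
  have e33 := hkey 1 2 2 (by omega) (by omega) (by omega)
  rw [pow_one] at e33
  have e34 := hkey 2 2 1 (by omega) (by omega) (by omega)
  rw [pow_one] at e34
  rw [jacobi3_rot p (U ^ 2) (U ^ 2) U] at e34
  have e42 := hkey 1 1 3 (by omega) (by omega) (by omega)
  rw [pow_one] at e42
  rw [jacobi3_rot p U U (U ^ 3)] at e42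
  have e43 := hkey 2 1 2 (by omega) (by omega) (by omega)
  rw [pow_one] at e43
  rw [jacobi3_swap p (U ^ 2) U (U ^ 2)] at e43
  have e44 := hkey 3 1 1 (by omega) (by omega) (by omega)
  rw [pow_one] at e44
  -- normalize the goal
  simp only [hL]
  rw [show Finset.Icc (1 : ℕ) 4 = {1, 2, 3, 4} from by decide]
  rw [Finset.sum_insert (by decide), Finset.sum_insert (by decide),
    Finset.sum_insert (by decide), Finset.sum_singleton]
  simp only [Finset.sum_range_succ, Finset.sum_range_zero, zero_add]
  simp only [hUpow, Nat.reduceAdd, Nat.reduceMul, pow_zero, pow_one, inv_one,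
    hU5, hU6, hU7, hU8, hi1, hi2, hi3, hi4, hg0]
  linear_combination (-6 : ℂ) * hP1 + (-6 : ℂ) * hP2 + e11 + e12 + e13 + e21 + e22 + e24 +
    e31 + e33 + e34 + e42 + e43 + e44
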